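/- For every δ > 0, α ∈ [0,1) and R > 0, the function Q : ℝ → ℝ defined by Q(z) := (1/2)z² + (b/(2D*δ))·∫_z^0 |g(s)−1|^{1−α}/(p(s)·g(s)) ds for z ≤ 0 and Q(z) := R·∫_0^z (e^s/g(s)²)(e^s−1) ds for z > 0 is differentiable on ℝ with Q'(0) = 0, satisfies Q(0) = 0 and Q(z) > 0 for z ≠ 0, and Q(z) → +∞ as |z| → ∞; consequently, the function V(x1,x2) := e^{x1} − x1 − 1 + Q(x2) satisfies V(0,0) = 0, V(x) > 0 for all x ∈ ℝ² \ {0}, and V(x) → +∞ as ‖x‖ → ∞. -/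

import Mathlib

set_option maxHeartbeats 1000000 in
open intervalIntegral in
/-- Properties of the Lyapunov function building blocks Q and V. -/
theorem stmt_3
    (S_in Sstar p0 b Dstar : ℝ) (μ : ℝ → ℝ)
    (hSin : 0 < S_in) (hSstar : Sstar ∈ Set.Ioo 0 S_in)
    (hp0 : 0 < p0) (hb : 0 ≤ b) (hDstar : 0 < Dstar)
    (hμ_bdd : BddAbove (Set.range μ))
    (hμ_C1 : ContDiffOn ℝ 1 μ (Set.Ici 0))
    (hμ_nonneg : ∀ S, 0 ≤ S → 0 ≤ μ S)
    (hμ_zero : μ 0 = 0) (hμ_pos : ∀ S, 0 < S → 0 < μ S)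
    (heq : p0 * μ Sstar = b + Dstar)
    (κ : ℝ) (hκ : κ = (S_in - Sstar) / Sstar)
    (p g : ℝ → ℝ)
    (hp : ∀ z, p z = κ * Real.exp (-z) + 1)
    (hg : ∀ z, g z = μ (S_in / p z) / μ Sstar)
    (δ α R : ℝ) (hδ : 0 < δ) (hα : α ∈ Set.Ico (0 : ℝ) 1) (hR : 0 < R)
    (Q : ℝ → ℝ)
    (hQ : ∀ z, Q z = if z ≤ 0 then
        (1/2) * z^2 + (b / (2 * Dstar * δ)) *
          ∫ s in z..(0:ℝ), |g s - 1| ^ (1 - α) / (p s * g s)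
      else
        R * ∫ s in (0:ℝ)..z, (Real.exp s / (g s)^2) * (Real.exp s - 1))
    (V : ℝ × ℝ → ℝ)
    (hV : ∀ x : ℝ × ℝ, V x = Real.exp x.1 - x.1 - 1 + Q x.2) :
    -- Q is differentiable on ℝ with Q'(0) = 0
    (∀ z : ℝ, DifferentiableAt ℝ Q z) ∧ deriv Q 0 = 0 ∧
    -- Q is positive definite
    Q 0 = 0 ∧ (∀ z : ℝ, z ≠ 0 → 0 < Q z) ∧
    -- Q is radially unbounded
    Filter.Tendsto Q Filter.atTop Filter.atTop ∧
    Filter.Tendsto Q Filter.atBot Filter.atTop ∧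
    -- V is positive definite and radially unbounded
    V 0 = 0 ∧ (∀ x : ℝ × ℝ, x ≠ 0 → 0 < V x) ∧
    Filter.Tendsto V (Filter.cocompact (ℝ × ℝ)) Filter.atTop := by
  obtain ⟨hS0, hSlt⟩ := hSstar
  have h1α : (0:ℝ) < 1 - α := by have := hα.2; linarith
  have hκpos : 0 < κ := by rw [hκ]; exact div_pos (by linarith) hS0
  have hppos : ∀ z, 0 < p z := by
    intro z; rw [hp]; positivity
  have hμS : 0 < μ Sstar := hμ_pos _ hS0
  have hgpos : ∀ z, 0 < g z := by
    intro z; rw [hg]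
    exact div_pos (hμ_pos _ (div_pos hSin (hppos z))) hμS
  have hpcont : Continuous p := by
    have hpe : p = fun z => κ * Real.exp (-z) + 1 := funext hp
    rw [hpe]; continuity
  have hgcont : Continuous g := by
    have hge : g = fun z => μ (S_in / p z) / μ Sstar := funext hg
    rw [hge]
    refine Continuous.div_const ?_ _
    rw [continuous_iff_continuousAt]
    intro z
    have hpos : 0 < S_in / p z := div_pos hSin (hppos z)
    have hμca : ContinuousAt μ (S_in / p z) :=
      hμ_C1.continuousOn.continuousAt (Ici_mem_nhds hpos)
    have hinner : ContinuousAt (fun z => S_in / p z) z :=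
      continuousAt_const.div hpcont.continuousAt (hppos z).ne'
    have hcomp : ContinuousAt (μ ∘ fun w => S_in / p w) z :=
      ContinuousAt.comp (g := μ) (f := fun w => S_in / p w) (x := z) hμca hinner
    exact hcomp
  have hg0 : g 0 = 1 := by
    have hSine : S_in ≠ 0 := ne_of_gt hSin
    have hSse : Sstar ≠ 0 := ne_of_gt hS0
    have hp0' : p 0 = S_in / Sstar := by
      rw [hp, hκ, neg_zero, Real.exp_zero, mul_one]; field_simp; ring
    have h2 : S_in / p 0 = Sstar := by rw [hp0']; field_simp
    rw [hg, h2, div_self hμS.ne']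
  set c := b / (2 * Dstar * δ) with hcdef
  have hcnn : 0 ≤ c := by positivity
  set h : ℝ → ℝ := fun s => |g s - 1| ^ (1 - α) / (p s * g s) with hhdef
  set k : ℝ → ℝ := fun s => (Real.exp s / (g s)^2) * (Real.exp s - 1) with hkdef
  have hhcont : Continuous h := by
    rw [hhdef]
    refine Continuous.div ?_ (hpcont.mul hgcont) fun s => (mul_pos (hppos s) (hgpos s)).ne'
    exact ((hgcont.sub continuous_const).abs).rpow_const fun s => Or.inr h1α.le
  have hkcont : Continuous k := by
    rw [hkdef]
    exact (Real.continuous_exp.div (hgcont.pow 2) fun s => (pow_pos (hgpos s) 2).ne').mul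
      (Real.continuous_exp.sub continuous_const)
  have hh0 : h 0 = 0 := by
    rw [hhdef]; simp [hg0, Real.zero_rpow h1α.ne']
  have hk0 : k 0 = 0 := by rw [hkdef]; simp
  have hInth : ∀ a b : ℝ, IntervalIntegrable h MeasureTheory.volume a b :=
    fun a b => hhcont.intervalIntegrable a b
  have hIntk : ∀ a b : ℝ, IntervalIntegrable k MeasureTheory.volume a b :=
    fun a b => hkcont.intervalIntegrable a b
  set F : ℝ → ℝ := fun z => (1/2) * z^2 + c * ∫ s in z..(0:ℝ), h s with hFdef
  set G : ℝ → ℝ := fun z => R * ∫ s in (0:ℝ)..z, k s with hGdef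
  have hQF : ∀ z ≤ (0:ℝ), Q z = F z := by
    intro z hz; rw [hQ, if_pos hz]
  have hQG : ∀ z, 0 < z → Q z = G z := by
    intro z hz; rw [hQ, if_neg (not_le.mpr hz)]
  have hF0 : F 0 = 0 := by rw [hFdef]; simp
  have hG0 : G 0 = 0 := by rw [hGdef]; simp
  have hQ0 : Q 0 = 0 := by rw [hQF 0 le_rfl, hF0]
  have hQG' : ∀ z ∈ Set.Ici (0:ℝ), Q z = G z := by
    intro z hz
    rcases eq_or_lt_of_le (Set.mem_Ici.mp hz) with hz0 | hz0
    · rw [← hz0, hQ0, hG0]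
    · exact hQG z hz0
  -- FTC derivatives
  have hIH : ∀ z : ℝ, HasDerivAt (fun t => ∫ s in (0:ℝ)..t, h s) (h z) z := fun z =>
    intervalIntegral.integral_hasDerivAt_right (hInth 0 z)
      (hhcont.stronglyMeasurableAtFilter _ _) hhcont.continuousAt
  have hIK : ∀ z : ℝ, HasDerivAt (fun t => ∫ s in (0:ℝ)..t, k s) (k z) z := fun z =>
    intervalIntegral.integral_hasDerivAt_right (hIntk 0 z)
      (hkcont.stronglyMeasurableAtFilter _ _) hkcont.continuousAt
  have hFd : ∀ z : ℝ, HasDerivAt F (z - c * h z) z := by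
    intro z
    have h2 : HasDerivAt (fun t : ℝ => (1/2) * t^2) z z := by
      have h2' := (hasDerivAt_pow 2 z).const_mul (1/2 : ℝ)
      refine h2'.congr_deriv ?_
      push_cast; ring
    have h3 : HasDerivAt (fun t : ℝ => -∫ s in (0:ℝ)..t, h s) (-h z) z := (hIH z).neg
    have h4 : (fun t : ℝ => -∫ s in (0:ℝ)..t, h s) = fun t : ℝ => ∫ s in t..(0:ℝ), h s := by
      funext t; rw [intervalIntegral.integral_symm, neg_neg]
    rw [h4] at h3
    have h5 := h3.const_mul c
    have h6 := h2.add h5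
    rw [hFdef]
    refine h6.congr_deriv ?_
    ring
  have hGd : ∀ z : ℝ, HasDerivAt G (R * k z) z := by
    intro z
    rw [hGdef]
    exact (hIK z).const_mul R
  -- derivative of Q at 0
  have hQd0 : HasDerivAt Q 0 0 := by
    have hFw : HasDerivWithinAt Q 0 (Set.Iic 0) 0 := by
      have h1 := (hFd 0).hasDerivWithinAt (s := Set.Iic 0)
      rw [hh0] at h1
      norm_num at h1
      exact h1.congr (fun x hx => hQF x hx) (hQF 0 le_rfl)
    have hGw : HasDerivWithinAt Q 0 (Set.Ici 0) 0 := by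
      have h1 := (hGd 0).hasDerivWithinAt (s := Set.Ici 0)
      rw [hk0] at h1
      norm_num at h1
      exact h1.congr (fun x hx => hQG' x hx) (hQG' 0 Set.self_mem_Ici)
    have h2 := hFw.union hGw
    rw [Set.Iic_union_Ici] at h2
    exact hasDerivWithinAt_univ.mp h2
  have hQdiff : ∀ z : ℝ, DifferentiableAt ℝ Q z := by
    intro z
    rcases lt_trichotomy z 0 with hz | rfl | hz
    · have hev : Q =ᶠ[nhds z] F :=
        Filter.eventually_of_mem (Iio_mem_nhds hz) fun x hx => hQF x (le_of_lt hx)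
      exact ((hFd z).congr_of_eventuallyEq hev).differentiableAt
    · exact hQd0.differentiableAt
    · have hev : Q =ᶠ[nhds z] G :=
        Filter.eventually_of_mem (Ioi_mem_nhds hz) fun x hx => hQG x hx
      exact ((hGd z).congr_of_eventuallyEq hev).differentiableAt
  -- positivity
  have hhnn : ∀ s, 0 ≤ h s := fun s =>
    div_nonneg (Real.rpow_nonneg (abs_nonneg _) _) (mul_pos (hppos s) (hgpos s)).le
  have hknn : ∀ s, 0 ≤ s → 0 ≤ k s := fun s hs =>
    mul_nonneg (div_nonneg (Real.exp_pos s).le (pow_pos (hgpos s) 2).le)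
      (sub_nonneg.mpr (by nlinarith [Real.add_one_le_exp s]))
  have hQlbL : ∀ z ≤ (0:ℝ), (1/2) * z^2 ≤ Q z := by
    intro z hz
    rw [hQF z hz]
    simp only [hFdef]
    have hint : 0 ≤ ∫ s in z..(0:ℝ), h s :=
      intervalIntegral.integral_nonneg hz fun s _ => hhnn s
    linarith [mul_nonneg hcnn hint]
  have hQneg : ∀ z, z < 0 → 0 < Q z := by
    intro z hz
    have hzne : z ≠ 0 := hz.ne
    have h2 : 0 < (1/2) * z^2 := by positivity
    linarith [hQlbL z hz.le]
  have hQposR : ∀ z, 0 < z → 0 < Q z := by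
    intro z hz
    rw [hQG z hz]
    simp only [hGdef]
    have hIpos : 0 < ∫ s in (0:ℝ)..z, k s := by
      refine intervalIntegral.intervalIntegral_pos_of_pos_on (hIntk 0 z) ?_ hz
      intro s hs
      have hs0 : 0 < s := hs.1
      have he : 1 < Real.exp s := Real.one_lt_exp_iff.mpr hs0
      rw [hkdef]
      exact mul_pos (div_pos (Real.exp_pos s) (pow_pos (hgpos s) 2)) (by linarith)
    exact mul_pos hR hIpos
  have hQpos : ∀ z : ℝ, z ≠ 0 → 0 < Q z := fun z hz =>
    hz.lt_or_gt.elim (hQneg z) (hQposR z)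
  have hQnn : ∀ z, 0 ≤ Q z := by
    intro z
    rcases eq_or_ne z 0 with rfl | hz
    · exact le_of_eq hQ0.symm
    · exact (hQpos z hz).le
  -- atBot
  have htB : Filter.Tendsto Q Filter.atBot Filter.atTop := by
    apply Filter.tendsto_atTop_mono' Filter.atBot
      ((Filter.eventually_le_atBot (0:ℝ)).mono fun z hz => hQlbL z hz)
    have h1 : Filter.Tendsto (fun z : ℝ => z^2) Filter.atBot Filter.atTop := by
      have h2 := (Filter.tendsto_pow_atTop (by norm_num : (2:ℕ) ≠ 0)).comp
        (Filter.tendsto_neg_atBot_atTop (G := ℝ))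
      have h3 : ((fun x : ℝ => x ^ 2) ∘ Neg.neg) = fun z : ℝ => z ^ 2 := by
        funext z; simp [Function.comp, neg_sq]
      rwa [h3] at h2
    exact h1.const_mul_atTop (by norm_num : (0:ℝ) < 1/2)
  -- bounds for atTop
  obtain ⟨C, hC⟩ := hμ_bdd
  have hCb : ∀ y, μ y ≤ C := fun y => hC ⟨y, rfl⟩
  set M := C / μ Sstar with hMdef
  have hgM : ∀ z, g z ≤ M := fun z => by
    rw [hg, hMdef]; exact (div_le_div_iff_of_pos_right hμS).mpr (hCb _)
  have hM1 : (1:ℝ) ≤ M := hg0 ▸ hgM 0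
  have hMpos : 0 < M := lt_of_lt_of_le one_pos hM1
  have h1e : 1 < Real.exp 1 := Real.one_lt_exp_iff.mpr one_pos
  set m := Real.exp 1 * (Real.exp 1 - 1) / M^2 with hmdef
  have hmpos : 0 < m := by
    rw [hmdef]
    exact div_pos (mul_pos (Real.exp_pos 1) (by linarith)) (pow_pos hMpos 2)
  have hklb : ∀ s, 1 ≤ s → m ≤ k s := by
    intro s hs
    have he : Real.exp 1 ≤ Real.exp s := Real.exp_le_exp.mpr hs
    have hgs2 : (g s)^2 ≤ M^2 := pow_le_pow_left₀ (hgpos s).le (hgM s) 2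
    rw [hkdef, hmdef]
    simp only []
    rw [div_mul_eq_mul_div]
    exact div_le_div₀ (by nlinarith) (by nlinarith) (pow_pos (hgpos s) 2) hgs2
  have hQlbR : ∀ z, 1 ≤ z → R * (m * (z - 1)) ≤ Q z := by
    intro z hz
    have hz0 : (0:ℝ) < z := by linarith
    rw [hQG z hz0]
    simp only [hGdef]
    have hsplit : (∫ s in (0:ℝ)..(1:ℝ), k s) + (∫ s in (1:ℝ)..z, k s) = ∫ s in (0:ℝ)..z, k s :=
      intervalIntegral.integral_add_adjacent_intervals (hIntk 0 1) (hIntk 1 z)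
    have h01 : 0 ≤ ∫ s in (0:ℝ)..(1:ℝ), k s :=
      intervalIntegral.integral_nonneg (by norm_num) fun s hs => hknn s hs.1
    have h1z : m * (z - 1) ≤ ∫ s in (1:ℝ)..z, k s := by
      have h2 := intervalIntegral.integral_mono_on hz (_root_.intervalIntegrable_const (c := m))
        (hIntk 1 z) fun s hs => hklb s hs.1
      rw [intervalIntegral.integral_const, smul_eq_mul] at h2
      linarith
    have h3 : m * (z - 1) ≤ ∫ s in (0:ℝ)..z, k s := by linarith
    exact mul_le_mul_of_nonneg_left h3 hR.le
  have htT : Filter.Tendsto Q Filter.atTop Filter.atTop := by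
    apply Filter.tendsto_atTop_mono' Filter.atTop
      ((Filter.eventually_ge_atTop (1:ℝ)).mono fun z hz => hQlbR z hz)
    have h1 : Filter.Tendsto (fun z : ℝ => z - 1) Filter.atTop Filter.atTop := by
      have := Filter.tendsto_atTop_add_const_right Filter.atTop (-1 : ℝ) Filter.tendsto_id
      simpa [sub_eq_add_neg] using this
    exact (h1.const_mul_atTop hmpos).const_mul_atTop hR
  -- V
  have hexp_nn : ∀ t : ℝ, 0 ≤ Real.exp t - t - 1 := fun t => by
    nlinarith [Real.add_one_le_exp t]
  have hV0 : V 0 = 0 := by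
    rw [hV]; simp [hQ0]
  have hVpos : ∀ x : ℝ × ℝ, x ≠ 0 → 0 < V x := by
    intro x hx
    rw [hV]
    by_cases h1 : x.1 = 0
    · have h2 : x.2 ≠ 0 := fun h2 => hx (Prod.ext h1 h2)
      have := hQpos x.2 h2
      have := hexp_nn x.1
      linarith
    · have := Real.add_one_lt_exp h1
      have := hQnn x.2
      linarith
  have hWtop : Filter.Tendsto (fun t : ℝ => Real.exp t - t - 1)
      (Filter.cocompact ℝ) Filter.atTop := by
    rw [cocompact_eq_atBot_atTop, Filter.tendsto_sup]
    constructor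
    · apply Filter.tendsto_atTop_mono
        (fun t => by nlinarith [Real.exp_pos t] : ∀ t : ℝ, -t - 1 ≤ Real.exp t - t - 1)
      have h1 : Filter.Tendsto (fun t : ℝ => -t) Filter.atBot Filter.atTop :=
        Filter.tendsto_neg_atBot_atTop
      have := Filter.tendsto_atTop_add_const_right Filter.atBot (-1 : ℝ) h1
      simpa [sub_eq_add_neg] using this
    · have hlow : ∀ᶠ t : ℝ in Filter.atTop, t^2/4 ≤ Real.exp t - t - 1 := by
        refine (Filter.eventually_ge_atTop (0:ℝ)).mono fun t ht => ?_
        have h2 : Real.exp (t/2) * Real.exp (t/2) = Real.exp t := by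
          rw [← Real.exp_add]; ring_nf
        nlinarith [Real.add_one_le_exp (t/2), Real.exp_pos (t/2)]
      refine Filter.tendsto_atTop_mono' _ hlow ?_
      exact (Filter.tendsto_pow_atTop (by norm_num : (2:ℕ) ≠ 0)).atTop_div_const (by norm_num)
  have hQcc : Filter.Tendsto Q (Filter.cocompact ℝ) Filter.atTop := by
    rw [cocompact_eq_atBot_atTop, Filter.tendsto_sup]; exact ⟨htB, htT⟩
  have hVcc : Filter.Tendsto V (Filter.cocompact (ℝ × ℝ)) Filter.atTop := by
    rw [← Filter.coprod_cocompact]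
    unfold Filter.coprod
    rw [Filter.tendsto_sup]
    constructor
    · apply Filter.tendsto_atTop_mono
        (f := fun x : ℝ × ℝ => Real.exp x.1 - x.1 - 1)
      · intro x; rw [hV]; linarith [hQnn x.2]
      · exact hWtop.comp Filter.tendsto_comap
    · apply Filter.tendsto_atTop_mono (f := fun x : ℝ × ℝ => Q x.2)
      · intro x; rw [hV]; linarith [hexp_nn x.1]
      · exact hQcc.comp Filter.tendsto_comap
  exact ⟨hQdiff, hQd0.deriv, hQ0, hQpos, htT, htB, hV0, hVpos, hVcc⟩
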